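/- Sparre-Andersen combinatorial lemma: let n ≥ 1 and let x_1, ..., x_n be real numbers. For a permutation σ of {1,...,n}, let s^σ_0 = 0 and s^σ_j = x_{σ(1)} + ... + x_{σ(j)} for 1 ≤ j ≤ n, and say the first maximum of the partial sums occurs at index j ∈ {0,...,n} if s^σ_j > s^σ_i for all 0 ≤ i < j and s^σ_j ≥ s^σ_i for all j < i ≤ n. Then for every integer r with 0 ≤ r ≤ n, the number of permutations σ of {1,...,n} for which exactly r of the partial sums s^σ_1, ..., s^σ_n are strictly positive equals the number of permutations σ of {1,...,n} for which the first maximum of the partial sums occurs at index r. -/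

import Mathlib

/-- The `j`-th partial sum `s^σ_j = x_{σ(1)} + ⋯ + x_{σ(j)}` of the sequence
`x` permuted by `σ` (with `s^σ_0 = 0`). -/
def permPartialSum {n : ℕ} (x : Fin n → ℝ) (σ : Equiv.Perm (Fin n)) (j : ℕ) : ℝ :=
  ∑ i ∈ Finset.univ.filter (fun i : Fin n => (i : ℕ) < j), x (σ i)

variable {α : Type*}

/-- weighted sum of a list -/
def sf (f : α → ℝ) (l : List α) : ℝ := (l.map f).sum

/-- split a list into (positions with positive running sum, rest); `c` is the running sum so far -/
noncomputable def splitPos (f : α → ℝ) : List α → ℝ → List α × List α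
  | [], _ => ([], [])
  | a :: t, c =>
    let p := splitPos f t (c + f a)
    if 0 < c + f a then (a :: p.1, p.2) else (p.1, a :: p.2)

@[simp] lemma splitPos_nil (f : α → ℝ) (c : ℝ) : splitPos f [] c = ([], []) := rfl

lemma splitPos_cons (f : α → ℝ) (a : α) (t : List α) (c : ℝ) :
    splitPos f (a :: t) c =
      if 0 < c + f a then (a :: (splitPos f t (c + f a)).1, (splitPos f t (c + f a)).2)
      else ((splitPos f t (c + f a)).1, a :: (splitPos f t (c + f a)).2) := rfl

@[simp] lemma sf_nil (f : α → ℝ) : sf f [] = 0 := rfl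
@[simp] lemma sf_cons (f : α → ℝ) (a : α) (l : List α) : sf f (a :: l) = f a + sf f l := by
  simp [sf]
@[simp] lemma sf_append (f : α → ℝ) (l₁ l₂ : List α) : sf f (l₁ ++ l₂) = sf f l₁ + sf f l₂ := by
  simp [sf]
@[simp] lemma sf_reverse (f : α → ℝ) (l : List α) : sf f l.reverse = sf f l := by
  simp [sf, List.sum_reverse]

lemma splitPos_concat (f : α → ℝ) (c : ℝ) (t : List α) (a : α) :
    splitPos f (t ++ [a]) c =
      if 0 < c + sf f t + f a then ((splitPos f t c).1 ++ [a], (splitPos f t c).2)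
      else ((splitPos f t c).1, (splitPos f t c).2 ++ [a]) := by
  induction t generalizing c with
  | nil => simp [splitPos_cons]
  | cons b t ih =>
    simp only [List.cons_append, splitPos_cons, ih (c + f b), sf_cons]
    have h : c + (f b + sf f t) + f a = c + f b + sf f t + f a := by ring
    rw [h]
    split_ifs with h1 h2 <;> simp

lemma splitPos_perm (f : α → ℝ) (l : List α) (c : ℝ) :
    ((splitPos f l c).1 ++ (splitPos f l c).2).Perm l := by
  induction l generalizing c with
  | nil => simp
  | cons a t ih =>
    rw [splitPos_cons]
    split_ifs with h
    · simpa using (ih (c + f a)).cons a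
    · simp only
      exact (List.perm_middle).trans ((ih (c + f a)).cons a)

lemma splitPos_sum (f : α → ℝ) (l : List α) (c : ℝ) :
    sf f (splitPos f l c).1 + sf f (splitPos f l c).2 = sf f l := by
  have := (splitPos_perm f l c).map f
  have h2 := this.sum_eq
  simpa [sf] using h2

lemma splitPos_length (f : α → ℝ) (l : List α) (c : ℝ) :
    (splitPos f l c).1.length + (splitPos f l c).2.length = l.length := by
  simpa using (splitPos_perm f l c).length_eq

lemma splitPos_bounds (f : α → ℝ) (l : List α) :
    (∀ j, 0 < j → j ≤ (splitPos f l 0).1.length → 0 < sf f ((splitPos f l 0).1.take j)) ∧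
    (∀ j, sf f ((splitPos f l 0).2.take j) ≤ 0) := by
  induction l using List.reverseRecOn with
  | nil => simp; omega
  | append_singleton t a ih =>
    obtain ⟨ih1, ih2⟩ := ih
    have hvt : sf f (splitPos f t 0).2 ≤ 0 := by
      simpa [List.take_of_length_le (le_refl (splitPos f t 0).2.length)] using
        ih2 (splitPos f t 0).2.length
    have hut : 0 ≤ sf f (splitPos f t 0).1 := by
      rcases Nat.eq_zero_or_pos (splitPos f t 0).1.length with h | h
      · simp [List.eq_nil_of_length_eq_zero h]
      · have := ih1 _ h (le_refl _)
        rw [List.take_length] at this; linarith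
    have hsum := splitPos_sum f t 0
    rw [splitPos_concat]
    split_ifs with hc
    · rw [zero_add] at hc
      constructor
      · intro j hj0 hj
        simp only at hj ⊢
        rcases le_or_gt j (splitPos f t 0).1.length with h | h
        · rw [List.take_append_of_le_length h]; exact ih1 j hj0 h
        · have hj' : (splitPos f t 0).1.length + 1 ≤ j := h
          rw [List.length_append, List.length_singleton] at hj
          have : j = (splitPos f t 0).1.length + 1 := le_antisymm hj hj'
          subst this
          rw [List.take_of_length_le (by simp)]
          rw [sf_append, sf_cons, sf_nil]
          linarith
      · intro j; exact ih2 j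
    · rw [zero_add] at hc; push_neg at hc
      constructor
      · intro j hj0 hj; exact ih1 j hj0 hj
      · intro j
        simp only
        rcases le_or_gt j (splitPos f t 0).2.length with h | h
        · rw [List.take_append_of_le_length h]; exact ih2 j
        · rw [List.take_of_length_le (by simp; omega)]
          rw [sf_append, sf_cons, sf_nil]
          linarith

open Classical in
lemma splitPos_count (f : α → ℝ) (l : List α) :
    (splitPos f l 0).1.length =
      ((Finset.Icc 1 l.length).filter (fun j => 0 < sf f (l.take j))).card := by
  induction l using List.reverseRecOn with
  | nil => simp
  | append_singleton t a ih =>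
    have hIcc : Finset.Icc 1 (t.length + 1) = insert (t.length + 1) (Finset.Icc 1 t.length) := by
      ext j; simp [Finset.mem_Icc, Finset.mem_insert]; omega
    have hfilter :
        (Finset.Icc 1 t.length).filter (fun j => 0 < sf f ((t ++ [a]).take j)) =
        (Finset.Icc 1 t.length).filter (fun j => 0 < sf f (t.take j)) := by
      apply Finset.filter_congr
      intro j hj
      rw [Finset.mem_Icc] at hj
      rw [List.take_append_of_le_length hj.2]
    rw [splitPos_concat]
    rw [List.length_append, List.length_singleton, hIcc, Finset.filter_insert]
    have htake : (t ++ [a]).take (t.length + 1) = t ++ [a] := by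
      rw [List.take_of_length_le (by simp)]
    rw [htake]
    split_ifs with hc hc2 hc2
    · rw [Finset.card_insert_of_notMem (by simp [Finset.mem_Icc])]
      simp only [List.length_append, List.length_singleton]
      rw [hfilter] at *
      omega
    · exfalso; rw [zero_add] at hc; simp [sf_append] at hc2; linarith
    · exfalso; rw [zero_add] at hc; simp [sf_append] at hc2; push_neg at hc; linarith
    · rw [hfilter]; exact ih

lemma splitPos_inj (f : α → ℝ) : ∀ {l₁ l₂ : List α},
    splitPos f l₁ 0 = splitPos f l₂ 0 → l₁ = l₂ := by
  suffices H : ∀ N, ∀ l₁ l₂ : List α, l₁.length = N →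
      splitPos f l₁ 0 = splitPos f l₂ 0 → l₁ = l₂ by
    intro l₁ l₂ heq; exact H l₁.length l₁ l₂ rfl heq
  intro N
  induction N using Nat.strong_induction_on with
  | _ N ihN =>
  intro l₁ l₂ h heq
  have hlen : l₁.length = l₂.length := by
    rw [← splitPos_length f l₁ 0, ← splitPos_length f l₂ 0, heq]
  have hsum : sf f l₁ = sf f l₂ := by
    rw [← splitPos_sum f l₁ 0, ← splitPos_sum f l₂ 0, heq]
  rcases l₁.eq_nil_or_concat' with rfl | ⟨t₁, a₁, rfl⟩
  · have : l₂.length = 0 := by simpa using hlen.symm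
    exact (List.eq_nil_of_length_eq_zero this).symm
  rcases l₂.eq_nil_or_concat' with rfl | ⟨t₂, a₂, rfl⟩
  · simp at hlen
  rw [splitPos_concat, splitPos_concat] at heq
  have hs : sf f t₁ + f a₁ = sf f t₂ + f a₂ := by
    simpa [sf_append] using hsum
  have hlen' : t₁.length < N := by
    subst h; simp
  by_cases hc : 0 < 0 + sf f t₁ + f a₁
  · rw [if_pos hc, if_pos (by rw [zero_add] at hc ⊢; linarith)] at heq
    have h1 : (splitPos f t₁ 0).1 ++ [a₁] = (splitPos f t₂ 0).1 ++ [a₂] := (Prod.ext_iff.mp heq).1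
    have h2 : (splitPos f t₁ 0).2 = (splitPos f t₂ 0).2 := (Prod.ext_iff.mp heq).2
    have h1' := congrArg List.reverse h1
    simp only [List.reverse_append, List.reverse_cons, List.reverse_nil, List.nil_append,
      List.singleton_append, List.cons.injEq] at h1'
    obtain ⟨rfl, h1''⟩ := h1'
    have : (splitPos f t₁ 0).1 = (splitPos f t₂ 0).1 := by
      have := congrArg List.reverse h1''; simpa using this
    have ht : t₁ = t₂ := ihN t₁.length hlen' t₁ t₂ rfl (by rw [Prod.ext_iff]; exact ⟨this, h2⟩)
    rw [ht]
  · rw [if_neg hc, if_neg (by rw [zero_add] at hc ⊢; linarith)] at heq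
    have h1 : (splitPos f t₁ 0).1 = (splitPos f t₂ 0).1 := (Prod.ext_iff.mp heq).1
    have h2 : (splitPos f t₁ 0).2 ++ [a₁] = (splitPos f t₂ 0).2 ++ [a₂] := (Prod.ext_iff.mp heq).2
    have h2' := congrArg List.reverse h2
    simp only [List.reverse_append, List.reverse_cons, List.reverse_nil, List.nil_append,
      List.singleton_append, List.cons.injEq] at h2'
    obtain ⟨rfl, h2''⟩ := h2'
    have : (splitPos f t₁ 0).2 = (splitPos f t₂ 0).2 := by
      have := congrArg List.reverse h2''; simpa using this
    have ht : t₁ = t₂ := ihN t₁.length hlen' t₁ t₂ rfl (by rw [Prod.ext_iff]; exact ⟨h1, this⟩)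
    rw [ht]

section PermWord

variable {n : ℕ}

/-- the word of a permutation -/
def wordOf (σ : Equiv.Perm (Fin n)) : List (Fin n) := (List.finRange n).map σ

@[simp] lemma wordOf_length (σ : Equiv.Perm (Fin n)) : (wordOf σ).length = n := by
  simp [wordOf]

lemma wordOf_get (σ : Equiv.Perm (Fin n)) (i : ℕ) (hi : i < (wordOf σ).length) :
    (wordOf σ).get ⟨i, hi⟩ = σ ⟨i, by simpa using hi⟩ := by
  simp [wordOf]

lemma wordOf_nodup (σ : Equiv.Perm (Fin n)) : (wordOf σ).Nodup :=
  (List.nodup_finRange n).map σ.injective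

lemma wordOf_inj {σ τ : Equiv.Perm (Fin n)} (h : wordOf σ = wordOf τ) : σ = τ := by
  ext i
  have h' : ∀ a ∈ List.finRange n, σ a = τ a := List.map_inj_left.mp h
  exact congrArg Fin.val (h' i (List.mem_finRange i))

/-- permutation from a nodup list of length n -/
noncomputable def permOf (m : List (Fin n)) (hnd : m.Nodup) (hlen : m.length = n) :
    Equiv.Perm (Fin n) :=
  Equiv.ofBijective (fun i => m.get (Fin.cast hlen.symm i))
    ((Finite.injective_iff_bijective).mp
      (fun i j hij => by
        have := List.nodup_iff_injective_get.mp hnd hij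
        exact Fin.cast_injective _ this))

lemma wordOf_permOf (m : List (Fin n)) (hnd : m.Nodup) (hlen : m.length = n) :
    wordOf (permOf m hnd hlen) = m := by
  apply List.ext_get (by simp [hlen])
  intro i h1 h2
  rw [wordOf_get]
  simp [permOf, Equiv.ofBijective]

/-- bridge: partial sums equal prefix sums of word -/
lemma permPartialSum_eq_sf (x : Fin n → ℝ) (σ : Equiv.Perm (Fin n)) (j : ℕ) :
    permPartialSum x σ j = sf x ((wordOf σ).take j) := by
  induction j with
  | zero => simp [permPartialSum, sf]
  | succ j ih =>
    by_cases hj : j < n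
    · have hfil : (Finset.univ.filter (fun i : Fin n => (i : ℕ) < j + 1)) =
          insert ⟨j, hj⟩ (Finset.univ.filter (fun i : Fin n => (i : ℕ) < j)) := by
        ext i
        simp only [Finset.mem_filter, Finset.mem_insert, Finset.mem_univ, true_and]
        constructor
        · intro h
          rcases Nat.lt_succ_iff_lt_or_eq.mp h with h | h
          · exact Or.inr h
          · exact Or.inl (Fin.ext h)
        · rintro (rfl | h)
          · exact Nat.lt_succ_self j
          · exact Nat.lt_succ_of_lt h
      have hmem : ¬ (⟨j, hj⟩ : Fin n) ∈
          (Finset.univ.filter (fun i : Fin n => (i : ℕ) < j)) := by simp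
      have hlt : j < (wordOf σ).length := by simpa using hj
      have htake : (wordOf σ).take (j+1) = (wordOf σ).take j ++
          [(wordOf σ).get ⟨j, hlt⟩] := by
        rw [List.take_succ]
        simp [List.getElem?_eq_getElem hlt, List.concat_eq_append]
      unfold permPartialSum at *
      rw [hfil, Finset.sum_insert hmem, ih, htake, sf_append]
      have hg := wordOf_get σ j hlt
      rw [List.get_eq_getElem] at hg
      simp [sf, hg]
      ring
    · have hfil : (Finset.univ.filter (fun i : Fin n => (i : ℕ) < j + 1)) =
          (Finset.univ.filter (fun i : Fin n => (i : ℕ) < j)) := by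
        ext i
        simp only [Finset.mem_filter, Finset.mem_univ, true_and]
        have := i.isLt
        omega
      have htake : (wordOf σ).take (j+1) = (wordOf σ).take j := by
        rw [List.take_of_length_le (by simp; omega), List.take_of_length_le (by simp; omega)]
      unfold permPartialSum at *
      rw [hfil, htake, ih]

end PermWord

section Main

variable {n : ℕ} (x : Fin n → ℝ)

lemma mList_perm (σ : Equiv.Perm (Fin n)) :
    ((splitPos x (wordOf σ) 0).1.reverse ++ (splitPos x (wordOf σ) 0).2).Perm (wordOf σ) :=
  (((splitPos x (wordOf σ) 0).1.reverse_perm).append_right _).trans (splitPos_perm x (wordOf σ) 0)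

/-- the Sparre-Andersen rearrangement -/
noncomputable def gPerm (σ : Equiv.Perm (Fin n)) : Equiv.Perm (Fin n) :=
  permOf ((splitPos x (wordOf σ) 0).1.reverse ++ (splitPos x (wordOf σ) 0).2)
    (((mList_perm x σ).nodup_iff).mpr (wordOf_nodup σ))
    (by rw [(mList_perm x σ).length_eq, wordOf_length])

lemma wordOf_gPerm (σ : Equiv.Perm (Fin n)) :
    wordOf (gPerm x σ) = (splitPos x (wordOf σ) 0).1.reverse ++ (splitPos x (wordOf σ) 0).2 :=
  wordOf_permOf _ _ _

lemma ncard_pos_eq (σ : Equiv.Perm (Fin n)) :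
    Set.ncard {j : ℕ | 1 ≤ j ∧ j ≤ n ∧ 0 < permPartialSum x σ j} =
      (splitPos x (wordOf σ) 0).1.length := by
  classical
  have hset : {j : ℕ | 1 ≤ j ∧ j ≤ n ∧ 0 < permPartialSum x σ j} =
      ↑((Finset.Icc 1 n).filter (fun j => 0 < permPartialSum x σ j)) := by
    ext j
    simp [Finset.mem_Icc, and_assoc]
  rw [hset, Set.ncard_coe_finset, splitPos_count x (wordOf σ)]
  rw [wordOf_length]
  congr 1
  apply Finset.filter_congr
  intro j _
  rw [permPartialSum_eq_sf]

lemma gPerm_Mcond (σ : Equiv.Perm (Fin n)) (r : ℕ)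
    (hr : (splitPos x (wordOf σ) 0).1.length = r) :
    (∀ i, i < r → permPartialSum x (gPerm x σ) i < permPartialSum x (gPerm x σ) r) ∧
    (∀ i, i ≤ n → permPartialSum x (gPerm x σ) i ≤ permPartialSum x (gPerm x σ) r) := by
  set u := (splitPos x (wordOf σ) 0).1 with hu
  set v := (splitPos x (wordOf σ) 0).2 with hv
  have hbounds := splitPos_bounds x (wordOf σ)
  have hlenur : u.reverse.length = r := by rw [List.length_reverse]; exact hr
  have hword : wordOf (gPerm x σ) = u.reverse ++ v := wordOf_gPerm x σ
  have hpps : ∀ j, permPartialSum x (gPerm x σ) j = sf x ((u.reverse ++ v).take j) := by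
    intro j; rw [permPartialSum_eq_sf, hword]
  have htaker : (u.reverse ++ v).take r = u.reverse := by
    rw [List.take_append_of_le_length (le_of_eq hlenur.symm), List.take_of_length_le
      (le_of_eq hlenur)]
  -- key identity for i ≤ r
  have hkey : ∀ i, i ≤ r →
      permPartialSum x (gPerm x σ) r - permPartialSum x (gPerm x σ) i
        = sf x (u.take (r - i)) := by
    intro i hi
    rw [hpps, hpps, htaker,
      List.take_append_of_le_length (by rw [hlenur]; exact hi)]
    have hsplit : sf x u.reverse = sf x (u.reverse.take i) + sf x (u.reverse.drop i) := by
      conv_lhs => rw [← List.take_append_drop i u.reverse]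
      rw [sf_append]
    have hdrop : u.reverse.drop i = (u.take (u.length - i)).reverse := by
      rw [List.drop_reverse]
    have : u.length - i = r - i := by rw [hr]
    rw [hsplit, hdrop, this, sf_reverse]
    ring
  constructor
  · intro i hi
    have := hkey i (le_of_lt hi)
    have hpos : 0 < sf x (u.take (r - i)) :=
      hbounds.1 (r - i) (by omega) (by rw [hr]; omega)
    linarith
  · intro i _
    rcases le_or_gt i r with h | h
    · have := hkey i h
      rcases Nat.eq_zero_or_pos (r - i) with h0 | h0
      · rw [h0] at this; simp at this; linarith
      · have hpos : 0 < sf x (u.take (r - i)) :=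
          hbounds.1 (r - i) h0 (by rw [hr]; omega)
        linarith
    · rw [hpps, hpps, htaker, List.take_append,
        List.take_of_length_le (by rw [hlenur]; omega), hlenur]
      have := hbounds.2 (i - r)
      rw [sf_append]
      linarith

end Main

lemma gPerm_inj {n : ℕ} (x : Fin n → ℝ) {σ₁ σ₂ : Equiv.Perm (Fin n)} {r : ℕ}
    (h1 : (splitPos x (wordOf σ₁) 0).1.length = r)
    (h2 : (splitPos x (wordOf σ₂) 0).1.length = r)
    (h : gPerm x σ₁ = gPerm x σ₂) : σ₁ = σ₂ := by
  have hw : (splitPos x (wordOf σ₁) 0).1.reverse ++ (splitPos x (wordOf σ₁) 0).2 =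
      (splitPos x (wordOf σ₂) 0).1.reverse ++ (splitPos x (wordOf σ₂) 0).2 := by
    rw [← wordOf_gPerm, ← wordOf_gPerm, h]
  have hlen : (splitPos x (wordOf σ₁) 0).1.reverse.length =
      (splitPos x (wordOf σ₂) 0).1.reverse.length := by
    rw [List.length_reverse, List.length_reverse, h1, h2]
  obtain ⟨hu, hv⟩ := List.append_inj hw hlen
  have hu' : (splitPos x (wordOf σ₁) 0).1 = (splitPos x (wordOf σ₂) 0).1 := by
    have := congrArg List.reverse hu; simpa using this
  have hsplit : splitPos x (wordOf σ₁) 0 = splitPos x (wordOf σ₂) 0 := by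
    rw [Prod.ext_iff]; exact ⟨hu', hv⟩
  exact wordOf_inj (splitPos_inj x hsplit)

lemma M_exists_unique {n : ℕ} (x : Fin n → ℝ) (σ : Equiv.Perm (Fin n)) :
    ∃ r, r ≤ n ∧
      ((∀ i, i < r → permPartialSum x σ i < permPartialSum x σ r) ∧
       (∀ i, i ≤ n → permPartialSum x σ i ≤ permPartialSum x σ r)) := by
  classical
  set s := fun j => permPartialSum x σ j with hs
  have hne : ∃ j, j ≤ n ∧ ∀ i ≤ n, s i ≤ s j := by
    obtain ⟨b, hb, hmax⟩ := Finset.exists_max_image (Finset.range (n+1)) s ⟨0, by simp⟩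
    refine ⟨b, by simpa [Nat.lt_succ_iff] using hb, fun i hi => hmax i (by simp [Nat.lt_succ_iff, hi])⟩
  set r := Nat.find hne with hrdef
  have hrspec := Nat.find_spec hne
  refine ⟨r, hrspec.1, fun i hi => ?_, hrspec.2⟩
  have hile : i ≤ n := le_trans (le_of_lt hi) hrspec.1
  have hle : s i ≤ s r := hrspec.2 i hile
  rcases lt_or_eq_of_le hle with h | h
  · exact h
  · exfalso
    have : i < r → ¬(i ≤ n ∧ ∀ k ≤ n, s k ≤ s i) := fun hlt => Nat.find_min hne hlt
    exact this hi ⟨hile, fun k hk => h ▸ hrspec.2 k hk⟩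

lemma M_unique {n : ℕ} (x : Fin n → ℝ) (σ : Equiv.Perm (Fin n)) {r r' : ℕ}
    (hr : r ≤ n) (hr' : r' ≤ n)
    (h : (∀ i, i < r → permPartialSum x σ i < permPartialSum x σ r) ∧
       (∀ i, i ≤ n → permPartialSum x σ i ≤ permPartialSum x σ r))
    (h' : (∀ i, i < r' → permPartialSum x σ i < permPartialSum x σ r') ∧
       (∀ i, i ≤ n → permPartialSum x σ i ≤ permPartialSum x σ r')) : r = r' := by
  by_contra hne
  rcases Nat.lt_or_ge r r' with hlt | hge
  · have := h'.1 r hlt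
    have := h.2 r' hr'
    linarith
  · have hlt : r' < r := lt_of_le_of_ne hge (Ne.symm hne)
    have := h.1 r' hlt
    have := h'.2 r hr
    linarith

/-- Sparre-Andersen combinatorial lemma: for fixed real numbers `x₁,…,xₙ` and
`0 ≤ r ≤ n`, the number of permutations `σ` for which exactly `r` of the partial sums
`s^σ_1,…,s^σ_n` are strictly positive equals the number of permutations `σ` for which the
first maximum of the partial sums `s^σ_0,…,s^σ_n` occurs at index `r` (i.e. `s^σ_r > s^σ_i`
for `i < r` and `s^σ_r ≥ s^σ_i` for `i > r`). -/
theorem sparre_andersen_combinatorial_lemma (n : ℕ) (hn : 1 ≤ n) (x : Fin n → ℝ)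
    (r : ℕ) (hr : r ≤ n) :
    Nat.card {σ : Equiv.Perm (Fin n) //
        Set.ncard {j : ℕ | 1 ≤ j ∧ j ≤ n ∧ 0 < permPartialSum x σ j} = r} =
      Nat.card {σ : Equiv.Perm (Fin n) //
        (∀ i, i < r → permPartialSum x σ i < permPartialSum x σ r) ∧
        (∀ i, i ≤ n → permPartialSum x σ i ≤ permPartialSum x σ r)} := by
  classical
  set Pf : Equiv.Perm (Fin n) → ℕ := fun σ => (splitPos x (wordOf σ) 0).1.length with hPf
  have hPf_eq : ∀ σ, Set.ncard {j : ℕ | 1 ≤ j ∧ j ≤ n ∧ 0 < permPartialSum x σ j} = Pf σ :=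
    fun σ => ncard_pos_eq x σ
  set Mp : ℕ → Equiv.Perm (Fin n) → Prop := fun k σ =>
    (∀ i, i < k → permPartialSum x σ i < permPartialSum x σ k) ∧
    (∀ i, i ≤ n → permPartialSum x σ i ≤ permPartialSum x σ k) with hMp
  set Mf : Equiv.Perm (Fin n) → ℕ := fun σ => Nat.find (M_exists_unique x σ) with hMf
  have hMf_spec : ∀ σ, Mf σ ≤ n ∧ Mp (Mf σ) σ := fun σ => Nat.find_spec (M_exists_unique x σ)
  have hMp_iff : ∀ k, k ≤ n → ∀ σ, (Mp k σ ↔ Mf σ = k) := by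
    intro k hk σ
    constructor
    · intro h
      exact (M_unique x σ (hMf_spec σ).1 hk (hMf_spec σ).2 h)
    · rintro rfl
      exact (hMf_spec σ).2
  -- counts as finset cards
  have hcardP : ∀ k, Nat.card {σ : Equiv.Perm (Fin n) //
      Set.ncard {j : ℕ | 1 ≤ j ∧ j ≤ n ∧ 0 < permPartialSum x σ j} = k} =
      (Finset.univ.filter (fun σ => Pf σ = k)).card := by
    intro k
    rw [Nat.card_eq_fintype_card, Fintype.card_subtype]
    congr 1
    apply Finset.filter_congr
    intro σ _
    rw [hPf_eq σ]
  have hcardM : ∀ k, Nat.card {σ : Equiv.Perm (Fin n) // Mp k σ} =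
      (Finset.univ.filter (fun σ => Mp k σ)).card := by
    intro k
    rw [Nat.card_eq_fintype_card, Fintype.card_subtype]
  -- fiberwise sums
  have hPle : ∀ σ, Pf σ ≤ n := by
    intro σ
    show (splitPos x (wordOf σ) 0).1.length ≤ n
    have := splitPos_length x (wordOf σ) 0
    rw [wordOf_length] at this
    omega
  have hsumP : ∑ k ∈ Finset.range (n+1), (Finset.univ.filter (fun σ => Pf σ = k)).card =
      (Finset.univ : Finset (Equiv.Perm (Fin n))).card := by
    rw [← Finset.card_eq_sum_card_fiberwise (fun σ _ => by
      simp [Finset.mem_range, Nat.lt_succ_iff, hPle σ])]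
  have hsumM : ∑ k ∈ Finset.range (n+1), (Finset.univ.filter (fun σ => Mp k σ)).card =
      (Finset.univ : Finset (Equiv.Perm (Fin n))).card := by
    have : ∀ k ∈ Finset.range (n+1), (Finset.univ.filter (fun σ => Mp k σ)) =
        (Finset.univ.filter (fun σ => Mf σ = k)) := by
      intro k hk
      apply Finset.filter_congr
      intro σ _
      exact hMp_iff k (by simpa [Nat.lt_succ_iff] using hk) σ
    rw [Finset.sum_congr rfl (fun k hk => by rw [this k hk])]
    rw [← Finset.card_eq_sum_card_fiberwise (fun σ _ => by
      simp [Finset.mem_range, Nat.lt_succ_iff, (hMf_spec σ).1])]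
  -- termwise inequality via gPerm
  have hle : ∀ k ∈ Finset.range (n+1),
      (Finset.univ.filter (fun σ => Pf σ = k)).card ≤
      (Finset.univ.filter (fun σ => Mp k σ)).card := by
    intro k _
    apply Finset.card_le_card_of_injOn (gPerm x)
    · intro σ hσ
      rw [Finset.mem_coe, Finset.mem_filter] at hσ ⊢
      exact ⟨Finset.mem_univ _, gPerm_Mcond x σ k hσ.2⟩
    · intro σ₁ h₁ σ₂ h₂ h
      rw [Finset.coe_filter] at h₁ h₂
      exact gPerm_inj x h₁.2 h₂.2 h
  -- conclude
  have heq : ∀ k ∈ Finset.range (n+1),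
      (Finset.univ.filter (fun σ => Pf σ = k)).card =
      (Finset.univ.filter (fun σ => Mp k σ)).card :=
    (Finset.sum_eq_sum_iff_of_le hle).mp (hsumP.trans hsumM.symm)
  rw [hcardP r, hcardM r]
  exact heq r (by simp [Nat.lt_succ_iff, hr])
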